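/- arXiv:2604.15620 — 7 statements merged into one kernel-verified Lean document; each statement's English description precedes it below -/
import Mathlib

section
/- Let S, L, I, R : ℝ → ℝ be an SLIR solution on [0,∞). If S(0) ≥ 0, L(0) ≥ 0, I(0) ≥ 0 and R(0) ≥ 0, then S(t) ≥ 0, L(t) ≥ 0, I(t) ≥ 0 and R(t) ≥ 0 for all t ≥ 0. -/
open Set Filter Real
open scoped Topology

/-- Key slope estimate: the right difference quotient of the negative part
`max (-X z) 0` is eventually bounded by `(if X x ≤ 0 then max (-d) 0 else 0) + ε`. -/
lemma negPart_slope {X : ℝ → ℝ} {dd x : ℝ} (hX : HasDerivAt X dd x) {ε : ℝ} (hε : 0 < ε) :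
    ∀ᶠ z in 𝓝[>] x, (z - x)⁻¹ * (max (-X z) 0 - max (-X x) 0) <
      (if X x ≤ 0 then max (-dd) 0 else 0) + ε := by
  by_cases h : X x ≤ 0
  · rw [if_pos h]
    have ho := (hasDerivAt_iff_isLittleO.mp hX).def (half_pos hε)
    filter_upwards [ho.filter_mono nhdsWithin_le_nhds, self_mem_nhdsWithin] with z hz hz'
    have hzx : 0 < z - x := sub_pos.2 hz'
    have hXx : max (-X x) 0 = -X x := max_eq_left (neg_nonneg.2 h)
    have habs : |X z - X x - (z - x) * dd| ≤ ε / 2 * |z - x| := by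
      simpa [Real.norm_eq_abs, smul_eq_mul] using hz
    rw [abs_of_pos hzx] at habs
    have h1 : X x - X z ≤ (max (-dd) 0 + ε / 2) * (z - x) := by
      have h1' := (abs_le.1 habs).1
      nlinarith [le_max_left (-dd) (0:ℝ)]
    have h2 : max (-X z) 0 - max (-X x) 0 ≤ (max (-dd) 0 + ε / 2) * (z - x) := by
      rw [hXx]
      rcases le_total (-X z) 0 with h3 | h3
      · rw [max_eq_right h3]
        nlinarith [le_max_right (-dd) (0:ℝ)]
      · rw [max_eq_left h3]; linarith
    have h4 : (z - x)⁻¹ * (max (-X z) 0 - max (-X x) 0) ≤ max (-dd) 0 + ε / 2 := by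
      rw [inv_mul_le_iff₀ hzx, mul_comm]
      exact h2
    linarith
  · rw [if_neg h]
    push_neg at h
    have hev : ∀ᶠ z in 𝓝 x, 0 < X z := hX.continuousAt.eventually (eventually_gt_nhds h)
    filter_upwards [hev.filter_mono nhdsWithin_le_nhds] with z hzpos
    have e1 : max (-X z) 0 = 0 := max_eq_right (neg_nonpos.2 hzpos.le)
    have e2 : max (-X x) 0 = 0 := max_eq_right (neg_nonpos.2 h.le)
    rw [e1, e2]
    simpa using hε

set_option maxHeartbeats 2000000 in
/-- Positivity of SLIR solutions on [0,∞): if all compartments start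
nonnegative, they remain nonnegative for all t ≥ 0. -/
theorem slir_positivity
    (Λ μ β k γ d : ℝ)
    (hΛ : 0 < Λ) (hμ : 0 < μ) (hβ : 0 < β) (hk : 0 < k) (hγ : 0 < γ) (hd : 0 < d)
    (S L I R : ℝ → ℝ)
    (hNpos : ∀ t, 0 ≤ t → 0 < S t + L t + I t + R t)
    (hS : ∀ t, 0 ≤ t →
      HasDerivAt S (Λ - β * S t * I t / (S t + L t + I t + R t) - μ * S t) t)
    (hL : ∀ t, 0 ≤ t →
      HasDerivAt L (β * S t * I t / (S t + L t + I t + R t) - (k + μ) * L t) t)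
    (hI : ∀ t, 0 ≤ t → HasDerivAt I (k * L t - (γ + μ + d) * I t) t)
    (hR : ∀ t, 0 ≤ t → HasDerivAt R (γ * I t - μ * R t) t)
    (hS0 : 0 ≤ S 0) (hL0 : 0 ≤ L 0) (hI0 : 0 ≤ I 0) (hR0 : 0 ≤ R 0) :
    ∀ t, 0 ≤ t → 0 ≤ S t ∧ 0 ≤ L t ∧ 0 ≤ I t ∧ 0 ≤ R t := by
  intro t ht
  -- continuity on [0, t]
  have hScont : ContinuousOn S (Icc 0 t) := fun x hx => (hS x hx.1).continuousAt.continuousWithinAt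
  have hLcont : ContinuousOn L (Icc 0 t) := fun x hx => (hL x hx.1).continuousAt.continuousWithinAt
  have hIcont : ContinuousOn I (Icc 0 t) := fun x hx => (hI x hx.1).continuousAt.continuousWithinAt
  have hRcont : ContinuousOn R (Icc 0 t) := fun x hx => (hR x hx.1).continuousAt.continuousWithinAt
  have hNcont : ContinuousOn (fun x => S x + L x + I x + R x) (Icc 0 t) :=
    ((hScont.add hLcont).add hIcont).add hRcont
  have hne : (Icc (0:ℝ) t).Nonempty := nonempty_Icc.2 ht
  -- bound M on |S| and |I|
  obtain ⟨xM, hxM, hmax⟩ := isCompact_Icc.exists_isMaxOn hne ((hScont.abs).add (hIcont.abs))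
  set M : ℝ := |S xM| + |I xM| with hM
  have hMb : ∀ x ∈ Icc (0:ℝ) t, |S x| ≤ M ∧ |I x| ≤ M := by
    intro x hx
    have h : |S x| + |I x| ≤ |S xM| + |I xM| := hmax hx
    simp only [hM]
    constructor <;> nlinarith [abs_nonneg (S x), abs_nonneg (I x)]
  have hM0 : 0 ≤ M := add_nonneg (abs_nonneg _) (abs_nonneg _)
  -- lower bound ν on N
  obtain ⟨xν, hxν, hmin⟩ := isCompact_Icc.exists_isMinOn hne hNcont
  set ν : ℝ := S xν + L xν + I xν + R xν with hν
  have hνpos : 0 < ν := hNpos xν hxν.1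
  have hνle : ∀ x ∈ Icc (0:ℝ) t, ν ≤ S x + L x + I x + R x := fun x hx => hmin hx
  set c : ℝ := β * M / ν with hc
  have hc0 : 0 ≤ c := div_nonneg (mul_nonneg hβ.le hM0) hνpos.le
  set K : ℝ := 2 * c + k + γ with hK
  set f : ℝ → ℝ := fun x => max (-S x) 0 + max (-L x) 0 + max (-I x) 0 + max (-R x) 0 with hf
  set f' : ℝ → ℝ := fun x =>
      (if S x ≤ 0 then
        max (-(Λ - β * S x * I x / (S x + L x + I x + R x) - μ * S x)) 0 else 0)
    + (if L x ≤ 0 then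
        max (-(β * S x * I x / (S x + L x + I x + R x) - (k + μ) * L x)) 0 else 0)
    + (if I x ≤ 0 then max (-(k * L x - (γ + μ + d) * I x)) 0 else 0)
    + (if R x ≤ 0 then max (-(γ * I x - μ * R x)) 0 else 0) with hf'
  clear_value M ν c K f f'
  have hfcont : ContinuousOn f (Icc 0 t) := hf ▸
    (((hScont.neg.sup continuousOn_const).add (hLcont.neg.sup continuousOn_const)).add
      (hIcont.neg.sup continuousOn_const)).add (hRcont.neg.sup continuousOn_const)
  have hslope : ∀ x ∈ Ico (0:ℝ) t, ∀ r, f' x < r →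
      ∃ᶠ z in 𝓝[>] x, (z - x)⁻¹ * (f z - f x) < r := by
    intro x hx r hr
    have hx0 : (0:ℝ) ≤ x := hx.1
    set ε : ℝ := (r - f' x) / 4 with hε
    have hεpos : 0 < ε := hε ▸ div_pos (sub_pos.2 hr) (by norm_num)
    have e1 := negPart_slope (hS x hx0) hεpos
    have e2 := negPart_slope (hL x hx0) hεpos
    have e3 := negPart_slope (hI x hx0) hεpos
    have e4 := negPart_slope (hR x hx0) hεpos
    apply Filter.Eventually.frequently
    filter_upwards [e1, e2, e3, e4] with z h1 h2 h3 h4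
    have hsum : (z - x)⁻¹ * (f z - f x)
        = (z - x)⁻¹ * (max (-S z) 0 - max (-S x) 0)
        + (z - x)⁻¹ * (max (-L z) 0 - max (-L x) 0)
        + (z - x)⁻¹ * (max (-I z) 0 - max (-I x) 0)
        + (z - x)⁻¹ * (max (-R z) 0 - max (-R x) 0) := by
      simp only [hf]; ring
    have hfx : f' x
        = (if S x ≤ 0 then
            max (-(Λ - β * S x * I x / (S x + L x + I x + R x) - μ * S x)) 0 else 0)
        + (if L x ≤ 0 then
            max (-(β * S x * I x / (S x + L x + I x + R x) - (k + μ) * L x)) 0 else 0)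
        + (if I x ≤ 0 then max (-(k * L x - (γ + μ + d) * I x)) 0 else 0)
        + (if R x ≤ 0 then max (-(γ * I x - μ * R x)) 0 else 0) := by
      simp only [hf']
    rw [hsum]
    have : r = f' x + 4 * ε := by simp only [hε]; ring
    rw [this, hfx]
    linarith
  have hbound : ∀ x ∈ Ico (0:ℝ) t, f' x ≤ K * f x + 0 := by
    intro x hx
    have hxI : x ∈ Icc (0:ℝ) t := ⟨hx.1, hx.2.le⟩
    obtain ⟨hSb, hIb⟩ := hMb x hxI
    have hn : ν ≤ S x + L x + I x + R x := hνle x hxI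
    have hnpos : 0 < S x + L x + I x + R x := hNpos x hx.1
    have hsle : -S x ≤ max (-S x) 0 := le_max_left _ _
    have hlle : -L x ≤ max (-L x) 0 := le_max_left _ _
    have hile : -I x ≤ max (-I x) 0 := le_max_left _ _
    have hs0 : 0 ≤ max (-S x) 0 := le_max_right _ _
    have hl0 : 0 ≤ max (-L x) 0 := le_max_right _ _
    have hi0 : 0 ≤ max (-I x) 0 := le_max_right _ _
    have hr0 : 0 ≤ max (-R x) 0 := le_max_right _ _
    have hSabs := abs_le.1 hSb
    have hIabs := abs_le.1 hIb
    -- term 1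
    have h1 : (if S x ≤ 0 then
        max (-(Λ - β * S x * I x / (S x + L x + I x + R x) - μ * S x)) 0 else 0)
        ≤ c * max (-I x) 0 := by
      split_ifs with h
      · apply max_le _ (mul_nonneg hc0 hi0)
        have hsi : S x * I x ≤ M * max (-I x) 0 := by
          rcases le_or_gt (I x) 0 with hIneg | hIpos
          · have e : max (-I x) 0 = -I x := max_eq_left (neg_nonneg.2 hIneg)
            rw [e]
            have := mul_le_mul_of_nonneg_left hSabs.1 (neg_nonneg.2 hIneg)
            linarith only [this]
          · have h1 := mul_nonpos_of_nonpos_of_nonneg h hIpos.le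
            linarith only [h1, mul_nonneg hM0 hi0]
        have hdiv : β * S x * I x / (S x + L x + I x + R x)
            ≤ β * (M * max (-I x) 0) / ν := by
          rw [mul_assoc]
          exact div_le_div₀ (mul_nonneg hβ.le (mul_nonneg hM0 hi0))
            (mul_le_mul_of_nonneg_left hsi hβ.le) hνpos hn
        have hceq : c * max (-I x) 0 = β * (M * max (-I x) 0) / ν := by
          simp only [hc]; ring
        rw [hceq]
        have hμS : μ * S x ≤ 0 := mul_nonpos_of_nonneg_of_nonpos hμ.le h
        linarith only [hdiv, hμS, hΛ]
      · exact mul_nonneg hc0 hi0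
    -- term 2
    have h2 : (if L x ≤ 0 then
        max (-(β * S x * I x / (S x + L x + I x + R x) - (k + μ) * L x)) 0 else 0)
        ≤ c * (max (-S x) 0 + max (-I x) 0) := by
      split_ifs with h
      · apply max_le _ (mul_nonneg hc0 (by linarith))
        have hsi : -(S x * I x) ≤ M * (max (-S x) 0 + max (-I x) 0) := by
          have hMsum : 0 ≤ M * (max (-S x) 0 + max (-I x) 0) :=
            mul_nonneg hM0 (add_nonneg hs0 hi0)
          rcases le_or_gt (S x) 0 with hs | hs <;> rcases le_or_gt (I x) 0 with hi | hi
          · linarith only [mul_nonneg_of_nonpos_of_nonpos hs hi, hMsum]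
          · have e : max (-S x) 0 = -S x := max_eq_left (neg_nonneg.2 hs)
            rw [e]
            have := mul_le_mul_of_nonneg_left hIabs.2 (neg_nonneg.2 hs)
            linarith only [this, mul_nonneg hM0 hi0]
          · have e : max (-I x) 0 = -I x := max_eq_left (neg_nonneg.2 hi)
            rw [e]
            have := mul_le_mul_of_nonneg_left hSabs.2 (neg_nonneg.2 hi)
            linarith only [this, mul_nonneg hM0 hs0]
          · linarith only [mul_nonneg hs.le hi.le, hMsum]
        have hdiv : -(β * S x * I x) / (S x + L x + I x + R x)
            ≤ β * (M * (max (-S x) 0 + max (-I x) 0)) / ν := by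
          have e : -(β * S x * I x) = β * -(S x * I x) := by ring
          rw [e]
          exact div_le_div₀ (mul_nonneg hβ.le (mul_nonneg hM0 (by linarith)))
            (mul_le_mul_of_nonneg_left hsi hβ.le) hνpos hn
        have hceq : c * (max (-S x) 0 + max (-I x) 0)
            = β * (M * (max (-S x) 0 + max (-I x) 0)) / ν := by
          simp only [hc]; ring
        rw [hceq]
        have hkl : (k + μ) * L x ≤ 0 := mul_nonpos_of_nonneg_of_nonpos (by linarith) h
        have hneg : -(β * S x * I x) / (S x + L x + I x + R x)
            = -(β * S x * I x / (S x + L x + I x + R x)) := by ring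
        linarith only [hdiv, hkl, hneg.le, hneg.ge]
      · exact mul_nonneg hc0 (by linarith)
    -- term 3
    have h3 : (if I x ≤ 0 then max (-(k * L x - (γ + μ + d) * I x)) 0 else 0)
        ≤ k * max (-L x) 0 := by
      split_ifs with h
      · apply max_le _ (mul_nonneg hk.le hl0)
        have hgi : (γ + μ + d) * I x ≤ 0 :=
          mul_nonpos_of_nonneg_of_nonpos (by linarith : (0:ℝ) ≤ γ + μ + d) h
        have hkl := mul_le_mul_of_nonneg_left hlle hk.le
        linarith only [hgi, hkl]
      · exact mul_nonneg hk.le hl0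
    -- term 4
    have h4 : (if R x ≤ 0 then max (-(γ * I x - μ * R x)) 0 else 0)
        ≤ γ * max (-I x) 0 := by
      split_ifs with h
      · apply max_le _ (mul_nonneg hγ.le hi0)
        have hμr : μ * R x ≤ 0 := mul_nonpos_of_nonneg_of_nonpos hμ.le h
        have hgi := mul_le_mul_of_nonneg_left hile hγ.le
        linarith only [hμr, hgi]
      · exact mul_nonneg hγ.le hi0
    simp only [hf', hf, hK, add_zero]
    have p1 : 0 ≤ (c + k + γ) * max (-S x) 0 :=
      mul_nonneg (by linarith only [hc0, hk, hγ]) hs0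
    have p2 : 0 ≤ (2 * c + γ) * max (-L x) 0 :=
      mul_nonneg (by linarith only [hc0, hγ]) hl0
    have p3 : 0 ≤ k * max (-I x) 0 := mul_nonneg hk.le hi0
    have p4 : 0 ≤ (2 * c + k + γ) * max (-R x) 0 :=
      mul_nonneg (by linarith only [hc0, hk, hγ]) hr0
    linarith only [h1, h2, h3, h4, p1, p2, p3, p4]
  have hinit : f 0 ≤ 0 := by
    simp only [hf]
    rw [max_eq_right (neg_nonpos.2 hS0), max_eq_right (neg_nonpos.2 hL0),
      max_eq_right (neg_nonpos.2 hI0), max_eq_right (neg_nonpos.2 hR0)]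
    norm_num
  have key := le_gronwallBound_of_liminf_deriv_right_le hfcont hslope hinit hbound t ⟨ht, le_refl t⟩
  rw [sub_zero, gronwallBound_ε0_δ0] at key
  have k1 : 0 ≤ max (-S t) 0 := le_max_right _ _
  have k2 : 0 ≤ max (-L t) 0 := le_max_right _ _
  have k3 : 0 ≤ max (-I t) 0 := le_max_right _ _
  have k4 : 0 ≤ max (-R t) 0 := le_max_right _ _
  have e1 : -S t ≤ max (-S t) 0 := le_max_left _ _
  have e2 : -L t ≤ max (-L t) 0 := le_max_left _ _
  have e3 : -I t ≤ max (-I t) 0 := le_max_left _ _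
  have e4 : -R t ≤ max (-R t) 0 := le_max_left _ _
  have hft : max (-S t) 0 + max (-L t) 0 + max (-I t) 0 + max (-R t) 0 ≤ 0 := by
    simpa [hf] using key
  exact ⟨by linarith, by linarith, by linarith, by linarith⟩
end

section
/- There exists an equilibrium of the SLIR vector field with positive infectious compartment, i.e., a point (S*, L*, I*, R*) with S* > 0, L* > 0, I* > 0, R* > 0 and S* + L* + I* + R* > 0 at which f vanishes, if and only if R₀ > 1. -/
noncomputable def slirField (Λ μ β k γ d : ℝ) (x : Fin 4 → ℝ) : Fin 4 → ℝ :=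
  ![Λ - β * x 0 * x 2 / (x 0 + x 1 + x 2 + x 3) - μ * x 0,
    β * x 0 * x 2 / (x 0 + x 1 + x 2 + x 3) - (k + μ) * x 1,
    k * x 1 - (γ + μ + d) * x 2,
    γ * x 2 - μ * x 3]

lemma slir_eq_aux (Λ μ β k γ d S L I R N : ℝ) (hN : N ≠ 0) (hk : k ≠ 0)
    (hsum : S + L + I + R = N)
    (hβS : β * S * k = (k + μ) * (γ + μ + d) * N)
    (hkL : k * L = (γ + μ + d) * I)
    (hγR : γ * I = μ * R)
    (hμN : μ * N + d * I = Λ) :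
    slirField Λ μ β k γ d ![S, L, I, R] = 0 := by
  have hcancel : (β * S * I) * k = ((k + μ) * L * N) * k := by
    linear_combination I * hβS - (k + μ) * N * hkL
  have hβSI : β * S * I / N = (k + μ) * L := by
    rw [div_eq_iff hN]
    exact mul_right_cancel₀ hk hcancel
  funext i
  fin_cases i
  · simp [slirField]
    rw [hsum, hβSI]
    linear_combination -μ * hsum - hkL - hγR - hμN
  · simp [slirField]
    rw [hsum, hβSI, sub_self]
  · simp [slirField]
    linear_combination hkL
  · simp [slirField]
    linear_combination hγR

/-- An endemic equilibrium (all coordinates positive, in particular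
positive infectious compartment, and positive total population) exists if and
only if R₀ = βk/((k+μ)(γ+μ+d)) > 1. -/
theorem slir_endemic_equilibrium_exists_iff
    (Λ μ β k γ d : ℝ)
    (hΛ : 0 < Λ) (hμ : 0 < μ) (hβ : 0 < β) (hk : 0 < k) (hγ : 0 < γ) (hd : 0 < d) :
    (∃ S L I R : ℝ, 0 < S ∧ 0 < L ∧ 0 < I ∧ 0 < R ∧ 0 < S + L + I + R ∧
        slirField Λ μ β k γ d ![S, L, I, R] = 0) ↔
      1 < β * k / ((k + μ) * (γ + μ + d)) := by
  rw [one_lt_div (by positivity)]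
  constructor
  · rintro ⟨S, L, I, R, hS, hL, hI, hR, hN, heq⟩
    have h1 := congrFun heq 1
    have h2 := congrFun heq 2
    simp [slirField] at h1 h2
    have hNne : S + L + I + R ≠ 0 := ne_of_gt hN
    rw [sub_eq_zero, div_eq_iff hNne] at h1
    rw [sub_eq_zero] at h2
    have key : β * S * k * I = (k + μ) * (γ + μ + d) * (S + L + I + R) * I := by
      linear_combination k * h1 + (k + μ) * (S + L + I + R) * h2
    have key2 : β * S * k = (k + μ) * (γ + μ + d) * (S + L + I + R) :=
      mul_right_cancel₀ hI.ne' key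
    nlinarith [key2, mul_pos (mul_pos hβ hk) (show (0:ℝ) < L + I + R by linarith), hN,
      mul_pos hβ hk]
  · intro hR0
    have hdk : 0 < (k + μ) * (γ + μ + d) - d * k := by nlinarith
    have hbd : 0 < β - d := by nlinarith
    have hr : 0 < β * k - (k + μ) * (γ + μ + d) := by linarith
    obtain ⟨I, hIdef⟩ : ∃ x : ℝ,
        x = Λ * (β * k - (k + μ) * (γ + μ + d)) / ((k + μ) * (γ + μ + d) * (β - d)) := ⟨_, rfl⟩
    have hI : 0 < I := by rw [hIdef]; positivity
    have hΛdI : 0 < Λ - d * I := by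
      rw [hIdef, sub_pos,
        show d * (Λ * (β * k - (k + μ) * (γ + μ + d)) / ((k + μ) * (γ + μ + d) * (β - d)))
          = d * Λ * (β * k - (k + μ) * (γ + μ + d)) / ((k + μ) * (γ + μ + d) * (β - d)) by ring,
        div_lt_iff₀ (by positivity)]
      nlinarith [mul_pos hΛ (mul_pos hβ hdk)]
    obtain ⟨N, hNdef⟩ : ∃ x : ℝ, x = (Λ - d * I) / μ := ⟨_, rfl⟩
    have hN : 0 < N := by rw [hNdef]; positivity
    obtain ⟨S, hSdef⟩ : ∃ x : ℝ, x = (k + μ) * (γ + μ + d) * N / (β * k) := ⟨_, rfl⟩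
    have hS : 0 < S := by rw [hSdef]; positivity
    obtain ⟨L, hLdef⟩ : ∃ x : ℝ, x = (γ + μ + d) * I / k := ⟨_, rfl⟩
    have hL : 0 < L := by rw [hLdef]; positivity
    obtain ⟨R, hRdef⟩ : ∃ x : ℝ, x = γ * I / μ := ⟨_, rfl⟩
    have hR : 0 < R := by rw [hRdef]; positivity
    refine ⟨S, L, I, R, hS, hL, hI, hR, by linarith, ?_⟩
    refine slir_eq_aux Λ μ β k γ d S L I R N hN.ne' hk.ne' ?_ ?_ ?_ ?_ ?_
    · rw [hSdef, hLdef, hRdef, hNdef, hIdef]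
      field_simp
      ring
    · rw [hSdef]
      field_simp
    · rw [hLdef]
      field_simp
    · rw [hRdef]
      field_simp
    · rw [hNdef]
      field_simp
      ring
end

section
/- If R₀ > 1, then the SLIR vector field has exactly one equilibrium with positive infectious compartment: any two points (S₁, L₁, I₁, R₁) and (S₂, L₂, I₂, R₂), each with all coordinates positive and at which f vanishes, are equal. -/
lemma slir_aux (Λ μ β k γ d S L I R : ℝ)
    (hS : 0 < S) (hL : 0 < L) (hI : 0 < I) (hR : 0 < R)
    (heq : slirField Λ μ β k γ d ![S, L, I, R] = 0) :
    β * k * S = (k + μ) * (γ + μ + d) * (S + L + I + R) ∧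
    k * L = (γ + μ + d) * I ∧ μ * R = γ * I ∧
    Λ = μ * (S + L + I + R) + d * I := by
  have hN : 0 < S + L + I + R := by linarith
  have e0 := congrFun heq 0
  have e1 := congrFun heq 1
  have e2 := congrFun heq 2
  have e3 := congrFun heq 3
  simp [slirField] at e0 e1 e2 e3
  have hB : k * L = (γ + μ + d) * I := by linarith
  have hC : μ * R = γ * I := by linarith
  have hfrac : β * S * I / (S + L + I + R) = (k + μ) * L := by linarith
  have hE1 : β * S * I = (k + μ) * L * (S + L + I + R) :=
    (div_eq_iff hN.ne').mp hfrac
  have hA : β * k * S = (k + μ) * (γ + μ + d) * (S + L + I + R) := by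
    have h : (β * k * S) * I = ((k + μ) * (γ + μ + d) * (S + L + I + R)) * I := by
      linear_combination k * hE1 + (k + μ) * (S + L + I + R) * hB
    exact mul_right_cancel₀ hI.ne' h
  have hD : Λ = μ * (S + L + I + R) + d * I := by
    have h01 : Λ - μ * S = (k + μ) * L := by
      have := (div_eq_iff hN.ne').mp hfrac
      nlinarith [hE1]
    linarith
  exact ⟨hA, hB, hC, hD⟩

/-- If R₀ > 1, the endemic equilibrium is unique: any two equilibria
of the SLIR vector field with all coordinates positive coincide. -/
theorem slir_endemic_equilibrium_unique
    (Λ μ β k γ d : ℝ)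
    (hΛ : 0 < Λ) (hμ : 0 < μ) (hβ : 0 < β) (hk : 0 < k) (hγ : 0 < γ) (hd : 0 < d)
    (hR0 : 1 < β * k / ((k + μ) * (γ + μ + d)))
    (S₁ L₁ I₁ R₁ S₂ L₂ I₂ R₂ : ℝ)
    (h1 : 0 < S₁ ∧ 0 < L₁ ∧ 0 < I₁ ∧ 0 < R₁)
    (h2 : 0 < S₂ ∧ 0 < L₂ ∧ 0 < I₂ ∧ 0 < R₂)
    (heq1 : slirField Λ μ β k γ d ![S₁, L₁, I₁, R₁] = 0)
    (heq2 : slirField Λ μ β k γ d ![S₂, L₂, I₂, R₂] = 0) :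
    S₁ = S₂ ∧ L₁ = L₂ ∧ I₁ = I₂ ∧ R₁ = R₂ := by
  obtain ⟨hS₁, hL₁, hI₁, hR₁⟩ := h1
  obtain ⟨hS₂, hL₂, hI₂, hR₂⟩ := h2
  obtain ⟨hA1, hB1, hC1, hD1⟩ := slir_aux Λ μ β k γ d S₁ L₁ I₁ R₁ hS₁ hL₁ hI₁ hR₁ heq1
  obtain ⟨hA2, hB2, hC2, hD2⟩ := slir_aux Λ μ β k γ d S₂ L₂ I₂ R₂ hS₂ hL₂ hI₂ hR₂ heq2
  have hPpos : 0 < (k + μ) * (γ + μ + d) := by positivity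
  have hβk : (k + μ) * (γ + μ + d) < β * k := by
    have := (one_lt_div hPpos).mp hR0
    linarith
  have hβd : d < β := by
    have h1 : k * d < (k + μ) * (γ + μ + d) := by nlinarith
    have h2 : d * k < β * k := by linarith
    exact lt_of_mul_lt_mul_right h2 hk.le
  -- linear system in (N, I): Λkβ = μP·N + βP·I  and  Λ = μN + dI
  have hE1 : Λ * k * β = μ * ((k + μ) * (γ + μ + d)) * (S₁ + L₁ + I₁ + R₁)
      + β * ((k + μ) * (γ + μ + d)) * I₁ := by
    linear_combination β * k * hD1 + β * μ * hB1 + β * k * hC1 + μ * hA1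
  have hE2 : Λ * k * β = μ * ((k + μ) * (γ + μ + d)) * (S₂ + L₂ + I₂ + R₂)
      + β * ((k + μ) * (γ + μ + d)) * I₂ := by
    linear_combination β * k * hD2 + β * μ * hB2 + β * k * hC2 + μ * hA2
  have h6 : μ * ((S₁ + L₁ + I₁ + R₁) - (S₂ + L₂ + I₂ + R₂)) + d * (I₁ - I₂) = 0 := by
    linarith [hD1, hD2]
  have h7 : ((k + μ) * (γ + μ + d)) * (β - d) * (I₁ - I₂) = 0 := by
    linear_combination hE2 - hE1 - ((k + μ) * (γ + μ + d)) * h6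
  have hI : I₁ = I₂ := by
    rcases mul_eq_zero.mp h7 with h | h
    · exfalso; rcases mul_eq_zero.mp h with h' | h' <;> linarith
    · linarith
  have hN : S₁ + L₁ + I₁ + R₁ = S₂ + L₂ + I₂ + R₂ := by
    have : μ * ((S₁ + L₁ + I₁ + R₁) - (S₂ + L₂ + I₂ + R₂)) = 0 := by
      linear_combination h6 - d * hI
    rcases mul_eq_zero.mp this with h | h
    · linarith
    · linarith
  have hS : S₁ = S₂ := by
    have h : β * k * S₁ = β * k * S₂ := by rw [hA1, hA2, hN]
    exact mul_left_cancel₀ (by positivity) h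
  have hL : L₁ = L₂ := by
    have h : k * L₁ = k * L₂ := by rw [hB1, hB2, hI]
    exact mul_left_cancel₀ hk.ne' h
  have hR : R₁ = R₂ := by
    have h : μ * R₁ = μ * R₂ := by rw [hC1, hC2, hI]
    exact mul_left_cancel₀ hμ.ne' h
  exact ⟨hS, hL, hI, hR⟩
end

section
/- Let F be the 2×2 real matrix with rows (0, β) and (0, 0), and let V be the 2×2 real matrix with rows (k+μ, 0) and (−k, γ+μ+d). Then V is invertible, the matrix K = F · V⁻¹ has eigenvalues (over ℂ) exactly βk/((k+μ)(γ+μ+d)) and 0, and the spectral radius of K equals R₀ = βk/((k+μ)(γ+μ+d)). -/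
lemma spec_tri_aux (x y : ℂ) :
    spectrum ℂ (!![x, y; 0, 0] : Matrix (Fin 2) (Fin 2) ℂ) = {x, 0} := by
  ext z
  rw [spectrum.mem_iff, Matrix.isUnit_iff_isUnit_det, isUnit_iff_ne_zero, not_not]
  simp only [Matrix.det_fin_two, Matrix.sub_apply, Matrix.algebraMap_matrix_apply]
  simp [Set.mem_insert_iff, sub_eq_zero, mul_eq_zero, eq_comm]

lemma srad_aux (M : Matrix (Fin 2) (Fin 2) ℂ) (r : ℝ) (hr : 0 ≤ r)
    (h : spectrum ℂ M = {(r:ℂ), 0}) :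
    spectralRadius ℂ M = ENNReal.ofReal r := by
  rw [spectralRadius, h, iSup_insert, iSup_singleton]
  simp [Complex.nnnorm_real, Real.enorm_eq_ofReal hr]
  exact Real.enorm_eq_ofReal hr

/-- Next-generation matrix. With F = [[0, β],[0,0]] and
V = [[k+μ, 0],[−k, γ+μ+d]], V is invertible, the matrix K = F·V⁻¹ has complex
spectrum exactly {βk/((k+μ)(γ+μ+d)), 0}, and its spectral radius equals
R₀ = βk/((k+μ)(γ+μ+d)). -/
theorem slir_next_generation_matrix
    (Λ μ β k γ d : ℝ)
    (hΛ : 0 < Λ) (hμ : 0 < μ) (hβ : 0 < β) (hk : 0 < k) (hγ : 0 < γ) (hd : 0 < d) :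
    IsUnit (!![k + μ, 0; -k, γ + μ + d] : Matrix (Fin 2) (Fin 2) ℝ) ∧
    spectrum ℂ
        (((!![0, β; 0, 0] : Matrix (Fin 2) (Fin 2) ℝ) *
            (!![k + μ, 0; -k, γ + μ + d] : Matrix (Fin 2) (Fin 2) ℝ)⁻¹).map
          (Complex.ofReal)) =
      {((β * k / ((k + μ) * (γ + μ + d)) : ℝ) : ℂ), 0} ∧
    spectralRadius ℂ
        (((!![0, β; 0, 0] : Matrix (Fin 2) (Fin 2) ℝ) *
            (!![k + μ, 0; -k, γ + μ + d] : Matrix (Fin 2) (Fin 2) ℝ)⁻¹).map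
          (Complex.ofReal)) =
      ENNReal.ofReal (β * k / ((k + μ) * (γ + μ + d))) := by
  have ha0 : 0 < k + μ := by positivity
  have hb0 : 0 < γ + μ + d := by positivity
  have hr0 : 0 ≤ β * k / ((k + μ) * (γ + μ + d)) := by positivity
  have hdet : (!![k + μ, 0; -k, γ + μ + d] : Matrix (Fin 2) (Fin 2) ℝ).det
      = (k + μ) * (γ + μ + d) := by
    simp [Matrix.det_fin_two_of]
  have hU : IsUnit (!![k + μ, 0; -k, γ + μ + d] : Matrix (Fin 2) (Fin 2) ℝ) := by
    rw [Matrix.isUnit_iff_isUnit_det, hdet]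
    exact (mul_pos ha0 hb0).ne'.isUnit
  have hinv : (!![k + μ, 0; -k, γ + μ + d] : Matrix (Fin 2) (Fin 2) ℝ)⁻¹
      = ((k + μ) * (γ + μ + d))⁻¹ • !![γ + μ + d, 0; k, k + μ] := by
    rw [Matrix.inv_def, hdet, Matrix.adjugate_fin_two]
    simp [Ring.inverse_eq_inv']
  have hK : (!![0, β; 0, 0] : Matrix (Fin 2) (Fin 2) ℝ) *
      (!![k + μ, 0; -k, γ + μ + d] : Matrix (Fin 2) (Fin 2) ℝ)⁻¹
      = !![β * k / ((k + μ) * (γ + μ + d)), β / (γ + μ + d); 0, 0] := by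
    rw [hinv]
    ext i j
    fin_cases i <;> fin_cases j <;>
      simp [Matrix.mul_apply, Fin.sum_univ_two, mul_comm] <;> field_simp <;> ring
  have hmap : ((!![0, β; 0, 0] : Matrix (Fin 2) (Fin 2) ℝ) *
      (!![k + μ, 0; -k, γ + μ + d] : Matrix (Fin 2) (Fin 2) ℝ)⁻¹).map Complex.ofReal
      = !![((β * k / ((k + μ) * (γ + μ + d)) : ℝ) : ℂ),
            ((β / (γ + μ + d) : ℝ) : ℂ); 0, 0] := by
    rw [hK]
    ext i j
    fin_cases i <;> fin_cases j <;> simp [Matrix.map_apply]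
  have hspec := hmap ▸ spec_tri_aux ((β * k / ((k + μ) * (γ + μ + d)) : ℝ) : ℂ)
      ((β / (γ + μ + d) : ℝ) : ℂ)
  refine ⟨hU, hspec, srad_aux _ _ hr0 hspec⟩
end

section
/- Let M be the 2×2 real matrix with rows (−(k+μ), β) and (k, −(γ+μ+d)), regarded as a matrix over ℂ. Every eigenvalue of M has negative real part if and only if R₀ < 1. -/
lemma spec_char (a b c e : ℝ) (z : ℂ) :
    z ∈ spectrum ℂ ((!![a, b; c, e] : Matrix (Fin 2) (Fin 2) ℝ).map Complex.ofReal) ↔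
      (z - a) * (z - e) - b * c = 0 := by
  rw [spectrum.mem_iff, Matrix.isUnit_iff_isUnit_det, isUnit_iff_ne_zero, not_not]
  have : (algebraMap ℂ (Matrix (Fin 2) (Fin 2) ℂ) z -
      (!![a, b; c, e] : Matrix (Fin 2) (Fin 2) ℝ).map Complex.ofReal) =
      !![z - a, -b; -c, z - e] := by
    ext i j; fin_cases i <;> fin_cases j <;>
      simp [Matrix.algebraMap_matrix_apply, Matrix.map_apply]
  rw [this, Matrix.det_fin_two_of]
  constructor <;> intro h <;> linear_combination h

/-- For M = [[−(k+μ), β],[k, −(γ+μ+d)]] viewed over ℂ, every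
eigenvalue of M has negative real part iff R₀ = βk/((k+μ)(γ+μ+d)) < 1. -/
theorem slir_infection_submatrix_hurwitz_iff
    (Λ μ β k γ d : ℝ)
    (hΛ : 0 < Λ) (hμ : 0 < μ) (hβ : 0 < β) (hk : 0 < k) (hγ : 0 < γ) (hd : 0 < d) :
    (∀ z ∈ spectrum ℂ
        ((!![-(k + μ), β; k, -(γ + μ + d)] : Matrix (Fin 2) (Fin 2) ℝ).map
          Complex.ofReal), z.re < 0) ↔
      β * k / ((k + μ) * (γ + μ + d)) < 1 := by
  set a : ℝ := k + μ with ha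
  set b : ℝ := γ + μ + d with hb
  have ha0 : 0 < a := by positivity
  have hb0 : 0 < b := by positivity
  have hab : 0 < a * b := by positivity
  rw [div_lt_one hab]
  constructor
  · intro H
    set D : ℝ := (a - b) ^ 2 + 4 * (β * k) with hD
    have hD0 : 0 ≤ D := by positivity
    set s : ℝ := Real.sqrt D with hs
    have hs2 : s ^ 2 = D := Real.sq_sqrt hD0
    set r : ℝ := (-(a + b) + s) / 2 with hr
    have hmem : (r : ℂ) ∈ spectrum ℂ
        ((!![-(k + μ), β; k, -(γ + μ + d)] : Matrix (Fin 2) (Fin 2) ℝ).map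
          Complex.ofReal) := by
      rw [spec_char]
      have hreal : (r - -a) * (r - -b) - β * k = 0 := by
        rw [hr]; nlinarith [hs2]
      push_cast [← ha, ← hb]
      exact_mod_cast congrArg (Complex.ofReal) hreal
    have hrneg : r < 0 := by simpa using H _ hmem
    have hs0 : 0 ≤ s := Real.sqrt_nonneg D
    have hslt : s < a + b := by rw [hr] at hrneg; linarith
    nlinarith [hs2]
  · intro hR z hz
    rw [spec_char] at hz
    have heq : (z + a) * (z + b) - (β * k : ℝ) = 0 := by
      push_cast [← ha, ← hb] at hz ⊢; linear_combination hz
    have hre := congrArg Complex.re heq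
    have him := congrArg Complex.im heq
    simp [Complex.mul_re, Complex.mul_im] at hre him
    set x := z.re
    set y := z.im
    rcases mul_eq_zero.mp (show y * (2 * x + a + b) = 0 by linarith [him]) with h1 | h1
    · by_contra hx
      push_neg at hx
      nlinarith [hre]
    · linarith
end

section
/- Let M be the 2×2 real matrix with rows (−(k+μ), β) and (k, −(γ+μ+d)). If R₀ > 1, then M has a real eigenvalue that is strictly positive. -/
/-- For M = [[−(k+μ), β],[k, −(γ+μ+d)]], if R₀ > 1 then M has a
strictly positive real eigenvalue. -/
theorem slir_infection_submatrix_unstable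
    (Λ μ β k γ d : ℝ)
    (hΛ : 0 < Λ) (hμ : 0 < μ) (hβ : 0 < β) (hk : 0 < k) (hγ : 0 < γ) (hd : 0 < d)
    (hR0 : 1 < β * k / ((k + μ) * (γ + μ + d))) :
    ∃ x : ℝ, 0 < x ∧
      x ∈ spectrum ℝ (!![-(k + μ), β; k, -(γ + μ + d)] : Matrix (Fin 2) (Fin 2) ℝ) := by
  set a : ℝ := k + μ with ha
  set b : ℝ := γ + μ + d with hb
  have ha0 : 0 < a := by positivity
  have hb0 : 0 < b := by positivity
  have hab : a * b < β * k := by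
    have h := (lt_div_iff₀ (by positivity : (0:ℝ) < a * b)).mp hR0
    linarith
  have hΔ : 0 < (a + b) ^ 2 - 4 * (a * b - β * k) := by nlinarith
  set x : ℝ := (-(a + b) + Real.sqrt ((a + b) ^ 2 - 4 * (a * b - β * k))) / 2 with hx
  have hsq : Real.sqrt ((a + b) ^ 2 - 4 * (a * b - β * k)) ^ 2
      = (a + b) ^ 2 - 4 * (a * b - β * k) := Real.sq_sqrt hΔ.le
  have hsgt : a + b < Real.sqrt ((a + b) ^ 2 - 4 * (a * b - β * k)) := by
    have := Real.sqrt_nonneg ((a + b) ^ 2 - 4 * (a * b - β * k))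
    nlinarith
  refine ⟨x, by rw [hx]; linarith, ?_⟩
  rw [spectrum.mem_iff]
  intro hunit
  rw [Matrix.isUnit_iff_isUnit_det] at hunit
  have hdet : ((algebraMap ℝ (Matrix (Fin 2) (Fin 2) ℝ)) x
      - !![-(k + μ), β; k, -(γ + μ + d)]).det = 0 := by
    have : (algebraMap ℝ (Matrix (Fin 2) (Fin 2) ℝ)) x
        - !![-(k + μ), β; k, -(γ + μ + d)]
        = !![x + a, -β; -k, x + b] := by
      rw [Matrix.algebraMap_eq_diagonal]
      ext i j
      fin_cases i <;> fin_cases j <;>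
        simp [Matrix.diagonal, ha, hb] <;> ring
    rw [this, Matrix.det_fin_two_of]
    nlinarith
  rw [hdet] at hunit
  exact hunit.ne_zero rfl
end

section
/- Let J be the 4×4 real matrix with rows (−μ, 0, −β, 0), (0, −(k+μ), β, 0), (0, k, −(γ+μ+d), 0), (0, 0, γ, −μ), and let M be the 2×2 real matrix with rows (−(k+μ), β) and (k, −(γ+μ+d)). Then the characteristic polynomial of J equals (X + μ)² times the characteristic polynomial of M; consequently, every complex eigenvalue of J has negative real part if and only if R₀ < 1, and if R₀ > 1 then J has an eigenvalue with positive real part. -/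
open Polynomial Matrix

lemma mem_spec_iff' {n : ℕ} (A : Matrix (Fin n) (Fin n) ℂ) (z : ℂ) :
    z ∈ spectrum ℂ A ↔ A.charpoly.eval z = 0 := by
  rw [spectrum.mem_iff, Matrix.isUnit_iff_isUnit_det, isUnit_iff_ne_zero, not_ne_iff]
  have h1 : A.charpoly.eval z = ((charmatrix A).map (evalRingHom z)).det := by
    rw [Matrix.charpoly]
    exact RingHom.map_det (evalRingHom z) _
  have h2 : (charmatrix A).map (evalRingHom z) = (algebraMap ℂ (Matrix (Fin n) (Fin n) ℂ)) z - A := by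
    refine Matrix.ext fun i j => ?_
    by_cases h : i = j
    · subst h; simp [charmatrix_apply_eq, Matrix.algebraMap_matrix_apply]
    · simp [charmatrix_apply_ne _ _ _ h, Matrix.algebraMap_matrix_apply, h]
  rw [h1, h2]

lemma quad_root_nonneg' {a b : ℝ} (ha : 0 < a) (hb : b ≤ 0) :
    ∃ x : ℝ, 0 ≤ x ∧ x ^ 2 + a * x + b = 0 ∧ (b < 0 → 0 < x) := by
  set s := Real.sqrt (a ^ 2 - 4 * b) with hs
  have hd : 0 ≤ a ^ 2 - 4 * b := by nlinarith
  have hs2 : s ^ 2 = a ^ 2 - 4 * b := Real.sq_sqrt hd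
  have hsa : a ≤ s := by
    have := Real.sqrt_le_sqrt (show a ^ 2 ≤ a ^ 2 - 4 * b by nlinarith)
    rwa [Real.sqrt_sq ha.le] at this
  refine ⟨(-a + s) / 2, by linarith, by nlinarith, fun hb' => ?_⟩
  have : a < s := by
    have := Real.sqrt_lt_sqrt (by positivity) (show a ^ 2 < a ^ 2 - 4 * b by nlinarith)
    rwa [Real.sqrt_sq ha.le] at this
  linarith

lemma quad_root_neg_re' {a b : ℝ} (ha : 0 < a) (hb : 0 < b) (z : ℂ)
    (hz : z ^ 2 + (a : ℂ) * z + (b : ℂ) = 0) : z.re < 0 := by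
  by_contra hre
  push_neg at hre
  have h1 : (z ^ 2 + (a : ℂ) * z + (b : ℂ)).re = 0 := by rw [hz]; simp
  have h2 : (z ^ 2 + (a : ℂ) * z + (b : ℂ)).im = 0 := by rw [hz]; simp
  rw [sq] at h1 h2
  simp [Complex.add_re, Complex.mul_re, Complex.add_im, Complex.mul_im] at h1 h2
  have hy : z.im = 0 := by
    rcases mul_eq_zero.mp (show z.im * (2 * z.re + a) = 0 by linarith) with h | h
    · exact h
    · nlinarith
  nlinarith [sq_nonneg z.re]

set_option maxHeartbeats 1000000 in
/-- The characteristic polynomial of the Jacobian J at the DFE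
factors as (X + μ)² times the characteristic polynomial of the infection
submatrix M; consequently all complex eigenvalues of J have negative real part
iff R₀ < 1, and if R₀ > 1 then J has an eigenvalue with positive real part. -/
theorem slir_DFE_jacobian_charpoly_and_stability
    (Λ μ β k γ d : ℝ)
    (hΛ : 0 < Λ) (hμ : 0 < μ) (hβ : 0 < β) (hk : 0 < k) (hγ : 0 < γ) (hd : 0 < d) :
    Matrix.charpoly
        (!![-μ, 0, -β, 0;
            0, -(k + μ), β, 0;
            0, k, -(γ + μ + d), 0;
            0, 0, γ, -μ] : Matrix (Fin 4) (Fin 4) ℝ) =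
      (X + C μ) ^ 2 *
        Matrix.charpoly (!![-(k + μ), β; k, -(γ + μ + d)] : Matrix (Fin 2) (Fin 2) ℝ) ∧
    ((∀ z ∈ spectrum ℂ
        ((!![-μ, 0, -β, 0;
             0, -(k + μ), β, 0;
             0, k, -(γ + μ + d), 0;
             0, 0, γ, -μ] : Matrix (Fin 4) (Fin 4) ℝ).map Complex.ofReal),
        z.re < 0) ↔ β * k / ((k + μ) * (γ + μ + d)) < 1) ∧
    (1 < β * k / ((k + μ) * (γ + μ + d)) →
      ∃ z ∈ spectrum ℂ
        ((!![-μ, 0, -β, 0;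
             0, -(k + μ), β, 0;
             0, k, -(γ + μ + d), 0;
             0, 0, γ, -μ] : Matrix (Fin 4) (Fin 4) ℝ).map Complex.ofReal),
        0 < z.re) := by
  set J : Matrix (Fin 4) (Fin 4) ℝ :=
    !![-μ, 0, -β, 0;
       0, -(k + μ), β, 0;
       0, k, -(γ + μ + d), 0;
       0, 0, γ, -μ] with hJ
  set M : Matrix (Fin 2) (Fin 2) ℝ := !![-(k + μ), β; k, -(γ + μ + d)] with hM
  set a : ℝ := (k + μ) + (γ + μ + d) with ha
  set b : ℝ := (k + μ) * (γ + μ + d) - β * k with hb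
  have ha0 : 0 < a := by positivity
  -- charmatrix computations
  have h1 : charmatrix J =
      !![X + C μ, 0, C β, 0;
         0, X + C (k + μ), -C β, 0;
         0, -C k, X + C (γ + μ + d), 0;
         0, 0, -C γ, X + C μ] := by
    refine Matrix.ext fun i j => ?_
    fin_cases i <;> fin_cases j <;>
      simp [hJ, charmatrix_apply, Matrix.diagonal, Matrix.vecHead, Matrix.vecTail] <;> ring
  have h2 : charmatrix M = !![X + C (k + μ), -C β; -C k, X + C (γ + μ + d)] := by
    refine Matrix.ext fun i j => ?_
    fin_cases i <;> fin_cases j <;>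
      simp [hM, charmatrix_apply, Matrix.diagonal, Matrix.vecHead, Matrix.vecTail] <;> ring
  have hMc : M.charpoly = X ^ 2 + C a * X + C b := by
    rw [Matrix.charpoly, h2, Matrix.det_fin_two]
    simp [ha, hb, C_add, C_mul, C_sub]
    ring
  have hfact : J.charpoly = (X + C μ) ^ 2 * M.charpoly := by
    rw [Matrix.charpoly, Matrix.charpoly, h1, h2, Matrix.det_fin_two]
    simp [Matrix.det_succ_row_zero, Fin.sum_univ_succ, Fin.succAbove]
    ring
  refine ⟨hfact, ?_, ?_⟩
  · -- spectrum characterization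
    have hden : 0 < (k + μ) * (γ + μ + d) := by positivity
    have hspec : ∀ z : ℂ, z ∈ spectrum ℂ (J.map Complex.ofReal) ↔
        (z = -(μ : ℂ) ∨ z ^ 2 + (a : ℂ) * z + (b : ℂ) = 0) := by
      intro z
      rw [mem_spec_iff']
      have hcp : (J.map Complex.ofReal).charpoly = J.charpoly.map Complex.ofRealHom := by
        rw [← Matrix.charpoly_map]
        congr 1
      rw [hcp, hfact, hMc]
      simp only [Polynomial.map_mul, Polynomial.map_pow, Polynomial.map_add, Polynomial.map_ofNat,
        map_X, map_C, eval_mul, eval_pow, eval_add, eval_X, eval_C, Complex.ofRealHom_eq_coe]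
      rw [mul_eq_zero, pow_eq_zero_iff (two_ne_zero)]
      constructor
      · rintro (h | h)
        · left; exact eq_neg_of_add_eq_zero_left h
        · right; exact h
      · rintro (h | h)
        · left; rw [h]; ring
        · right; exact h
    have hR : β * k / ((k + μ) * (γ + μ + d)) < 1 ↔ 0 < b := by
      rw [div_lt_one hden, hb]; constructor <;> intro <;> linarith
    rw [hR]
    constructor
    · intro hall
      by_contra hble
      push_neg at hble
      obtain ⟨x, hx0, hxeq, -⟩ := quad_root_nonneg' ha0 hble
      have hmem : (x : ℂ) ∈ spectrum ℂ (J.map Complex.ofReal) := by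
        rw [hspec]
        right
        have : ((x ^ 2 + a * x + b : ℝ) : ℂ) = 0 := by rw [hxeq]; simp
        push_cast at this
        linear_combination this
      have := hall _ hmem
      simp at this
      linarith
    · intro hbpos z hz
      rcases (hspec z).mp hz with h | h
      · rw [h]; simpa using hμ
      · exact quad_root_neg_re' ha0 hbpos z h
  · intro hR
    have hden : 0 < (k + μ) * (γ + μ + d) := by positivity
    have hbneg : b < 0 := by
      rw [one_lt_div hden] at hR
      rw [hb]; linarith
    obtain ⟨x, -, hxeq, hxpos⟩ := quad_root_nonneg' ha0 hbneg.le
    have hspec : ∀ z : ℂ, z ∈ spectrum ℂ (J.map Complex.ofReal) ↔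
        (z = -(μ : ℂ) ∨ z ^ 2 + (a : ℂ) * z + (b : ℂ) = 0) := by
      intro z
      rw [mem_spec_iff']
      have hcp : (J.map Complex.ofReal).charpoly = J.charpoly.map Complex.ofRealHom := by
        rw [← Matrix.charpoly_map]
        congr 1
      rw [hcp, hfact, hMc]
      simp only [Polynomial.map_mul, Polynomial.map_pow, Polynomial.map_add, Polynomial.map_ofNat,
        map_X, map_C, eval_mul, eval_pow, eval_add, eval_X, eval_C, Complex.ofRealHom_eq_coe]
      rw [mul_eq_zero, pow_eq_zero_iff (two_ne_zero)]
      constructor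
      · rintro (h | h)
        · left; exact eq_neg_of_add_eq_zero_left h
        · right; exact h
      · rintro (h | h)
        · left; rw [h]; ring
        · right; exact h
    refine ⟨(x : ℂ), ?_, by simpa using hxpos hbneg⟩
    rw [hspec]
    right
    have : ((x ^ 2 + a * x + b : ℝ) : ℂ) = 0 := by rw [hxeq]; simp
    push_cast at this
    linear_combination this
end
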